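/- Let C_n be the cycle graph and S ∈ min(C_n) such that the complement of S contains at least two intervals of size one, say I_{j_1} = {r} and I_{j_2} = {s}. Then there exists a permutation σ of [n] that is S-consistent: it satisfies, for each j, (i) if σ(b_j) < σ(a_{j+1}) and |I_{j+1}| ≥ 2 then σ(a_{j+1}) < σ(a_{j+1}+1); (ii) if σ(b_j) < σ(a_{j+1}) and |I_j| ≥ 2 then σ(b_j − 1) < σ(b_j); (iii) if σ(b_j) > σ(a_{j+1}) and |I_{j+1}| ≥ 2 then σ(a_{j+1}) > σ(a_{j+1}+1); (iv) if σ(b_j) > σ(a_{j+1}) and |I_j| ≥ 2 then σ(b_j − 1) > σ(b_j); (v) if |I_j| ≥ 3 then σ is strictly monotone along I_j. -/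

import Mathlib

open MvPolynomial

variable {n : ℕ}

/-- Number of connected components of the subgraph of `G` induced on `T`. -/
noncomputable def numComp (G : SimpleGraph (Fin n)) (T : Set (Fin n)) : ℕ :=
  Nat.card (G.induce T).ConnectedComponent

/-- `a` and `b` lie in the same connected component of the subgraph induced on `T`. -/
def SameComp (G : SimpleGraph (Fin n)) (T : Set (Fin n)) (a b : Fin n) : Prop :=
  ∃ (ha : a ∈ T) (hb : b ∈ T), (G.induce T).Reachable ⟨a, ha⟩ ⟨b, hb⟩

/-- `S` is a minimal `k`-cut of `G`. -/
def IsMinKCut (G : SimpleGraph (Fin n)) (S : Set (Fin n)) (k : ℕ) : Prop :=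
  S.Nonempty ∧ S ≠ Set.univ ∧ numComp G Sᶜ = k ∧
    ∀ i ∈ S, numComp G (Sᶜ ∪ {i}) < numComp G Sᶜ

/-- The collection `min(G)`: all minimal `k`-cuts (`k ≥ 2`) together with `∅`. -/
def minSet (G : SimpleGraph (Fin n)) : Set (Set (Fin n)) :=
  {S | S = ∅ ∨ ∃ k, 2 ≤ k ∧ IsMinKCut G S k}

/-- `A` is a connected dominating set of the subgraph of `G` induced on `T`. -/
def ConnDom (G : SimpleGraph (Fin n)) (T A : Set (Fin n)) : Prop :=
  A ⊆ T ∧ (G.induce A).Connected ∧ ∀ v ∈ T, v ∉ A → ∃ a ∈ A, G.Adj v a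

/-- The polynomial ring `K[x_1,…,x_n,y_1,…,y_n]` over `ℂ`. -/
abbrev PolyRing (n : ℕ) := MvPolynomial (Fin n ⊕ Fin n) ℂ

/-- The binomial `f_{i,j} = x_i y_j − x_j y_i`. -/
noncomputable def fij (i j : Fin n) : PolyRing n :=
  X (Sum.inl i) * X (Sum.inr j) - X (Sum.inl j) * X (Sum.inr i)

/-- The binomial edge ideal of a graph. -/
noncomputable def beIdeal (G : SimpleGraph (Fin n)) : Ideal (PolyRing n) :=
  Ideal.span {g | ∃ i j, G.Adj i j ∧ g = fij i j}

/-- Localized v-number of `I` at `p`. -/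
noncomputable def vAt (I p : Ideal (PolyRing n)) : ℕ :=
  sInf {d | ∃ f : PolyRing n, f.IsHomogeneous d ∧ Submodule.colon I (Ideal.span {f}) = p}

/-- v-number of `I`. -/
noncomputable def vNum (I : Ideal (PolyRing n)) : ℕ :=
  sInf {d | ∃ f : PolyRing n, f.IsHomogeneous d ∧ (Submodule.colon I (Ideal.span {f})).IsPrime}

/-- The graph which is the disjoint union of complete graphs on the connected
components of the subgraph of `G` induced on `Sᶜ`. -/
def tildeG (G : SimpleGraph (Fin n)) (S : Set (Fin n)) : SimpleGraph (Fin n) :=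
  SimpleGraph.fromRel (fun a b => SameComp G Sᶜ a b)

/-- The minimal prime `P_S` of the binomial edge ideal. -/
noncomputable def primePS (G : SimpleGraph (Fin n)) (S : Set (Fin n)) : Ideal (PolyRing n) :=
  Ideal.span (({g | ∃ i ∈ S, g = X (Sum.inl i)} ∪ {g | ∃ i ∈ S, g = X (Sum.inr i)} : Set (PolyRing n)))
    ⊔ beIdeal (tildeG G S)

/-- `B` is a dependent set of the rank-≤2 matroid `M(S)`. -/
def depM (G : SimpleGraph (Fin n)) (S : Set (Fin n)) (B : Set (Fin n)) : Prop :=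
  (B ∩ S).Nonempty ∨ (∃ a b, a ∈ B ∧ b ∈ B ∧ a ≠ b ∧ SameComp G Sᶜ a b) ∨ 3 ≤ B.ncard

/-- `A` is a transversal of `{D(M(S'))\D(M(S)) : S' ∈ min(G)\{S}}` consisting of
singletons and pairs outside `D(M(S))`. -/
def IsTransversal (G : SimpleGraph (Fin n)) (S : Set (Fin n))
    (A : Finset (Finset (Fin n))) : Prop :=
  (∀ e ∈ A, e.card = 1 ∨ e.card = 2) ∧ (∀ e ∈ A, ¬ depM G S ↑e) ∧
    ∀ S' ∈ minSet G, S' ≠ S → ∃ e ∈ A, depM G S' ↑e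

/-- The singletons of `A`, viewed as a subset of `[n]`. -/
def A1set (A : Finset (Finset (Fin n))) : Finset (Fin n) :=
  (A.filter fun e => e.card = 1).biUnion id

/-- The pairs of `A`. -/
def A2set (A : Finset (Finset (Fin n))) : Finset (Finset (Fin n)) :=
  A.filter fun e => e.card = 2

/-- The binomial attached to an unordered pair. -/
noncomputable def fPair (e : Finset (Fin n)) : PolyRing n :=
  if h : e.Nonempty then fij (e.min' h) (e.max' h) else 1

/-- The generator `g_{A,C,D}`. -/
noncomputable def gPoly (A : Finset (Finset (Fin n))) (C D : Finset (Fin n)) : PolyRing n :=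
  (∏ k ∈ C, X (Sum.inl k)) * (∏ k ∈ D, X (Sum.inr k)) * ∏ e ∈ A2set A, fPair e

/-- The cycle graph on `[n]`. -/
def cycG (n : ℕ) [NeZero n] : SimpleGraph (Fin n) :=
  SimpleGraph.fromRel (fun i j => j = i + 1)

/-- The connected domination number of `G`. -/
noncomputable def gammaC (G : SimpleGraph (Fin n)) : ℕ :=
  sInf {k | ∃ A : Set (Fin n), ConnDom G Set.univ A ∧ A.ncard = k}

/-- `S'` is nice with respect to the components `V1`, `V2`. -/
def Nice (G : SimpleGraph (Fin n)) (V1 V2 S' : Set (Fin n)) : Prop :=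
  ¬ ∃ i j, i ∈ V1 \ S' ∧ j ∈ V2 \ S' ∧ SameComp G S'ᶜ i j

/-- `V1`, `V2` are the vertex sets of the two connected components of the
subgraph induced on `Sᶜ`. -/
def ComponentsOf (G : SimpleGraph (Fin n)) (S V1 V2 : Set (Fin n)) : Prop :=
  V1 ∪ V2 = Sᶜ ∧ Disjoint V1 V2 ∧ V1.Nonempty ∧ V2.Nonempty ∧
    (∀ a ∈ V1, ∀ b ∈ V1, SameComp G Sᶜ a b) ∧
    (∀ a ∈ V2, ∀ b ∈ V2, SameComp G Sᶜ a b) ∧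
    ∀ a ∈ V1, ∀ b ∈ V2, ¬ SameComp G Sᶜ a b

/-- Significance index of a variable: `x_1 > ⋯ > x_n > y_1 > ⋯ > y_n`. -/
def sigIdx (n : ℕ) : Fin n ⊕ Fin n → ℕ := Sum.elim (fun i => (i : ℕ)) (fun i => n + i)

/-- Lexicographic comparison of exponent vectors. -/
def lexLt (n : ℕ) (a b : (Fin n ⊕ Fin n) →₀ ℕ) : Prop :=
  ∃ v, a v < b v ∧ ∀ w, sigIdx n w < sigIdx n v → a w = b w

/-- `m` is the leading (lex-largest) exponent of `f`. -/
def IsLeadExp (n : ℕ) (f : PolyRing n) (m : (Fin n ⊕ Fin n) →₀ ℕ) : Prop :=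
  m ∈ f.support ∧ ∀ m' ∈ f.support, m' ≠ m → lexLt n m' m

/-- The initial ideal of `I` with respect to the lexicographic order. -/
noncomputable def inIdeal (I : Ideal (PolyRing n)) : Ideal (PolyRing n) :=
  Ideal.span {g | ∃ f ∈ I, ∃ m, IsLeadExp n f m ∧ g = monomial m 1}

/-- A permutation `σ` of `[n]` is `S`-consistent (for `S` an independent set of
the cycle `C_n`). -/
def SConsistent (n : ℕ) [NeZero n] (S : Set (Fin n)) (σ : Equiv.Perm (Fin n)) : Prop :=
  (∀ x : Fin n, x ∉ S → x + 1 ∈ S →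
    ((σ x < σ (x + 2) → x + 3 ∉ S → σ (x + 2) < σ (x + 3)) ∧
     (σ x < σ (x + 2) → x - 1 ∉ S → σ (x - 1) < σ x) ∧
     (σ (x + 2) < σ x → x + 3 ∉ S → σ (x + 3) < σ (x + 2)) ∧
     (σ (x + 2) < σ x → x - 1 ∉ S → σ x < σ (x - 1)))) ∧
  (∀ y : Fin n, y - 1 ∉ S → y ∉ S → y + 1 ∉ S → (σ (y - 1) < σ y ↔ σ y < σ (y + 1)))

/-- existence of an `S`-consistent permutation when the complement of `S`
has at least two singleton intervals. -/
theorem stmt6 {n : ℕ} [NeZero n] (hn : 3 ≤ n) (S : Set (Fin n)) (hS : S ∈ minSet (cycG n))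
    (r s : Fin n) (hrs : r ≠ s)
    (hr : r ∉ S ∧ r - 1 ∈ S ∧ r + 1 ∈ S)
    (hs : s ∉ S ∧ s - 1 ∈ S ∧ s + 1 ∈ S) :
    ∃ σ : Equiv.Perm (Fin n), SConsistent n S σ := by
  classical
  set M : ℕ := (s - r).val with hMdef
  have hMn : M < n := (s - r).isLt
  have hM0 : 0 < M := by
    have hne : s - r ≠ 0 := sub_ne_zero.mpr (Ne.symm hrs)
    rcases Nat.eq_zero_or_pos M with h | h
    · exact absurd (Fin.ext h : s - r = 0) hne
    · exact h
  let gN : Fin n → ℕ := fun i =>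
    if i.val < M then i.val else if i.val = M then n - 1 else n - 1 + M - i.val
  have hgN : ∀ i, gN i < n := by
    intro i
    have hi := i.isLt
    simp only [gN]
    split_ifs <;> omega
  let g : Fin n → Fin n := fun i => ⟨gN i, hgN i⟩
  have hginj : Function.Injective g := by
    intro i j hij
    have h1 : gN i = gN j := congrArg Fin.val hij
    have hi := i.isLt; have hj := j.isLt
    refine Fin.ext ?_
    simp only [gN] at h1
    split_ifs at h1 <;> omega
  let σ : Equiv.Perm (Fin n) :=
    (Equiv.subRight r).trans (Equiv.ofBijective g (Finite.injective_iff_bijective.mp hginj))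
  have hσ : ∀ v, σ v = g (v - r) := fun v => rfl
  have hone : ((1 : Fin n)).val = 1 := by
    have : ((1 : Fin n)).val = 1 % n := rfl
    rw [this, Nat.mod_eq_of_lt (by omega)]
  have hvaladd : ∀ i : Fin n, ((i + 1 : Fin n)).val = if i.val + 1 < n then i.val + 1 else 0 := by
    intro i
    have hi := i.isLt
    have hv : ((i + 1 : Fin n)).val = (i.val + 1) % n := by rw [Fin.val_add, hone]
    rw [hv]
    split_ifs with h
    · exact Nat.mod_eq_of_lt h
    · have h2 : i.val + 1 = n := by omega
      rw [h2, Nat.mod_self]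
  have hstep : ∀ v : Fin n, σ v < σ (v + 1) ↔ (v - r).val < M := by
    intro v
    rw [hσ, hσ]
    have hsub : (v + 1) - r = (v - r) + 1 := by open Fin.CommRing in ring
    rw [hsub]
    set i := v - r with hidef
    have hi := i.isLt
    have hii := hvaladd i
    show gN i < gN (i + 1) ↔ i.val < M
    simp only [gN, hii]
    split_ifs <;> omega
  have hvne : ∀ v : Fin n, v + 1 ≠ v := by
    intro v h
    have h1 : (1 : Fin n) = 0 := by
      have := congrArg (fun w => w - v) h
      simpa [add_comm, add_sub_cancel_right] using this
    have := congrArg Fin.val h1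
    rw [hone] at this
    simp at this
  have hdown : ∀ v : Fin n, σ (v + 1) < σ v ↔ M ≤ (v - r).val := by
    intro v
    constructor
    · intro h
      by_contra hc
      push_neg at hc
      exact absurd ((hstep v).mpr hc) (not_lt.mpr (le_of_lt h))
    · intro h
      rcases lt_trichotomy (σ (v + 1)) (σ v) with h1 | h1 | h1
      · exact h1
      · exact absurd (σ.injective h1) (hvne v)
      · exact absurd ((hstep v).mp h1) (by omega)
  -- wrap lemma: step from positions ≥ M down to < M means we passed r
  have L2 : ∀ v : Fin n, M ≤ (v - r).val → ((v + 1) - r).val < M → v + 1 = r := by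
    intro v h1 h2
    have hsub : (v + 1) - r = (v - r) + 1 := by open Fin.CommRing in ring
    rw [hsub] at h2
    have hii := hvaladd (v - r)
    have hi := (v - r).isLt
    have hz : ((v - r) + 1).val = 0 := by
      rw [hii] at h2 ⊢; split_ifs at h2 ⊢ <;> omega
    have : (v + 1) - r = 0 := by rw [hsub]; exact Fin.ext hz
    exact sub_eq_zero.mp this
  -- peak lemma: step from positions < M to ≥ M means we arrived at s
  have L3 : ∀ v : Fin n, (v - r).val < M → M ≤ ((v + 1) - r).val → v + 1 = s := by
    intro v h1 h2
    have hsub : (v + 1) - r = (v - r) + 1 := by open Fin.CommRing in ring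
    rw [hsub] at h2
    have hii := hvaladd (v - r)
    have hi := (v - r).isLt
    have hval : ((v - r) + 1).val = M := by
      rw [hii] at h2 ⊢; split_ifs at h2 ⊢ <;> omega
    have heq : (v + 1) - r = s - r := by
      rw [hsub]; exact Fin.ext (by rw [hval, hMdef])
    have := congrArg (fun w => w + r) heq
    simpa [sub_add_cancel] using this
  refine ⟨σ, ?_, ?_⟩
  · intro x hxS hx1S
    have hx2 : x + 2 = (x + 1) + 1 := by open Fin.CommRing in ring
    have hx3 : x + 3 = (x + 2) + 1 := by open Fin.CommRing in ring
    have hx0 : x = (x - 1) + 1 := by open Fin.CommRing in ring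
    refine ⟨?_, ?_, ?_, ?_⟩
    · -- (i)
      intro hlt h3S
      rw [hx3, hstep]
      by_contra hge
      push_neg at hge
      rcases Nat.lt_or_ge ((x + 1) - r).val M with h1 | h1
      · have hxs : (x + 1) + 1 = s := L3 (x + 1) h1 (by rwa [← hx2])
        have : x + 3 = s + 1 := by rw [hx3, hx2, hxs]
        exact h3S (this ▸ hs.2.2)
      · rcases Nat.lt_or_ge (x - r).val M with h0 | h0
        · have := L3 x h0 h1
          exact hs.1 (this ▸ hx1S)
        · have d1 : σ (x + 1) < σ x := (hdown x).mpr h0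
          have d2 : σ (x + 2) < σ (x + 1) := by rw [hx2]; exact (hdown (x + 1)).mpr h1
          exact absurd hlt (not_lt.mpr (le_of_lt (d2.trans d1)))
    · -- (ii)
      intro hlt hm1S
      have goal' : σ (x - 1) < σ ((x - 1) + 1) → σ (x - 1) < σ x := by rw [← hx0]; exact id
      refine goal' ((hstep (x - 1)).mpr ?_)
      by_contra hge
      push_neg at hge
      rcases Nat.lt_or_ge (x - r).val M with h0 | h0
      · have hxr : (x - 1) + 1 = r := L2 (x - 1) hge (by rwa [← hx0])
        rw [← hx0] at hxr
        have : x - 1 = r - 1 := by rw [hxr]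
        exact hm1S (this ▸ hr.2.1)
      · rcases Nat.lt_or_ge ((x + 1) - r).val M with h1 | h1
        · have := L2 x h0 h1
          exact hr.1 (this ▸ hx1S)
        · have d1 : σ (x + 1) < σ x := (hdown x).mpr h0
          have d2 : σ (x + 2) < σ (x + 1) := by rw [hx2]; exact (hdown (x + 1)).mpr h1
          exact absurd hlt (not_lt.mpr (le_of_lt (d2.trans d1)))
    · -- (iii)
      intro hlt h3S
      have goal' : σ ((x + 2) + 1) < σ (x + 2) → σ (x + 3) < σ (x + 2) := by
        rw [← hx3]; exact id
      refine goal' ((hdown (x + 2)).mpr ?_)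
      by_contra hge
      push_neg at hge
      rcases Nat.lt_or_ge ((x + 1) - r).val M with h1 | h1
      · rcases Nat.lt_or_ge (x - r).val M with h0 | h0
        · have u1 : σ x < σ (x + 1) := (hstep x).mpr h0
          have u2 : σ (x + 1) < σ (x + 2) := by rw [hx2]; exact (hstep (x + 1)).mpr h1
          exact absurd hlt (not_lt.mpr (le_of_lt (u1.trans u2)))
        · have := L2 x h0 h1
          exact hr.1 (this ▸ hx1S)
      · have hxr : (x + 1) + 1 = r := L2 (x + 1) h1 (by rwa [hx2] at hge)
        have : x + 3 = r + 1 := by rw [hx3, hx2, hxr]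
        exact h3S (this ▸ hr.2.2)
    · -- (iv)
      intro hlt hm1S
      have goal' : σ ((x - 1) + 1) < σ (x - 1) → σ x < σ (x - 1) := by rw [← hx0]; exact id
      refine goal' ((hdown (x - 1)).mpr ?_)
      by_contra hge
      push_neg at hge
      rcases Nat.lt_or_ge (x - r).val M with h0 | h0
      · rcases Nat.lt_or_ge ((x + 1) - r).val M with h1 | h1
        · have u1 : σ x < σ (x + 1) := (hstep x).mpr h0
          have u2 : σ (x + 1) < σ (x + 2) := by rw [hx2]; exact (hstep (x + 1)).mpr h1
          exact absurd hlt (not_lt.mpr (le_of_lt (u1.trans u2)))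
        · have := L3 x h0 h1
          exact hs.1 (this ▸ hx1S)
      · have hxs : (x - 1) + 1 = s := L3 (x - 1) hge (by rwa [← hx0])
        rw [← hx0] at hxs
        have : x - 1 = s - 1 := by rw [hxs]
        exact hm1S (this ▸ hs.2.1)
  · intro y h1 h2 h3
    have hy0 : y = (y - 1) + 1 := by open Fin.CommRing in ring
    constructor
    · intro h
      have h' : σ (y - 1) < σ ((y - 1) + 1) := by rw [← hy0]; exact h
      have hlt : ((y - 1) - r).val < M := (hstep (y - 1)).mp h'
      rw [hstep]
      by_contra hge
      push_neg at hge
      have hys : (y - 1) + 1 = s := L3 (y - 1) hlt (by rwa [← hy0])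
      rw [← hy0] at hys
      have : y + 1 = s + 1 := by rw [hys]
      exact h3 (this ▸ hs.2.2)
    · intro h
      have hlt : (y - r).val < M := (hstep y).mp h
      have goal' : σ (y - 1) < σ ((y - 1) + 1) → σ (y - 1) < σ y := by rw [← hy0]; exact id
      refine goal' ((hstep (y - 1)).mpr ?_)
      by_contra hge
      push_neg at hge
      have hyr : (y - 1) + 1 = r := L2 (y - 1) hge (by rwa [← hy0])
      rw [← hy0] at hyr
      have : y + 1 = r + 1 := by rw [hyr]
      exact h3 (this ▸ hr.2.2)
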